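/- Let R_j : ℝ³ → ℝ (j ∈ ℤ) satisfy the parabolic monotonicity conditions ∂₁R_j > 0 and ∂₃R_j > 0. If two sequences (x_j) and (x′_j) both satisfy R_j(x_{j−1}, x_j, x_{j+1}) = 0 for all j, and x_j = x′_j at some index j while x_{j−1} ≤ x′_{j−1} and x_{j+1} ≤ x′_{j+1} with at least one of these inequalities strict, then a contradiction follows; consequently any coincidence x_j = x′_j of two distinct solutions is a transverse crossing: (x_{j−1} − x′_{j−1})(x_{j+1} − x′_{j+1}) < 0. -/

import Mathlib

private lemma parab_no_tang_aux
    (R : ℤ → ℝ → ℝ → ℝ → ℝ)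
    (hR1 : ∀ j b c, StrictMono fun a => R j a b c)
    (hR3 : ∀ j a b, StrictMono fun c => R j a b c)
    (x x' : ℤ → ℝ)
    (hx : ∀ j, R j (x (j - 1)) (x j) (x (j + 1)) = 0)
    (hx' : ∀ j, R j (x' (j - 1)) (x' j) (x' (j + 1)) = 0) :
    ∀ j, x j = x' j → x (j - 1) ≤ x' (j - 1) → x (j + 1) ≤ x' (j + 1) →
      (x (j - 1) < x' (j - 1) ∨ x (j + 1) < x' (j + 1)) → False := by
  intro j hj h1 h3 hs
  have key : R j (x (j - 1)) (x j) (x (j + 1)) < R j (x' (j - 1)) (x' j) (x' (j + 1)) := by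
    rw [← hj]
    rcases hs with hs | hs
    · calc R j (x (j - 1)) (x j) (x (j + 1))
          ≤ R j (x (j - 1)) (x j) (x' (j + 1)) := (hR3 j _ _).monotone h3
        _ < R j (x' (j - 1)) (x j) (x' (j + 1)) := hR1 j _ _ hs
    · calc R j (x (j - 1)) (x j) (x (j + 1))
          < R j (x (j - 1)) (x j) (x' (j + 1)) := hR3 j _ _ hs
        _ ≤ R j (x' (j - 1)) (x j) (x' (j + 1)) := (hR1 j _ _).monotone h1
  rw [hx j, hx' j] at key
  exact lt_irrefl 0 key

private lemma parab_eq_prop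
    (R : ℤ → ℝ → ℝ → ℝ → ℝ)
    (hR1 : ∀ j b c, StrictMono fun a => R j a b c)
    (hR3 : ∀ j a b, StrictMono fun c => R j a b c)
    (x x' : ℤ → ℝ)
    (hx : ∀ j, R j (x (j - 1)) (x j) (x (j + 1)) = 0)
    (hx' : ∀ j, R j (x' (j - 1)) (x' j) (x' (j + 1)) = 0)
    (j : ℤ) (h1 : x j = x' j) (h2 : x (j + 1) = x' (j + 1)) :
    x = x' := by
  have step : ∀ k : ℤ, x k = x' k ∧ x (k + 1) = x' (k + 1) →
      x (k + 1) = x' (k + 1) ∧ x (k + 2) = x' (k + 2) := by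
    rintro k ⟨e1, e2⟩
    refine ⟨e2, ?_⟩
    have hxk := hx (k + 1)
    have hxk' := hx' (k + 1)
    simp only [add_sub_cancel_right] at hxk hxk'
    rw [e1, e2] at hxk
    have := (hR3 (k + 1) (x' k) (x' (k + 1))).injective (hxk.trans hxk'.symm)
    simpa [add_assoc] using this
  have stepb : ∀ k : ℤ, x k = x' k ∧ x (k + 1) = x' (k + 1) →
      x (k - 1) = x' (k - 1) ∧ x k = x' k := by
    rintro k ⟨e1, e2⟩
    refine ⟨?_, e1⟩
    have hxk := hx k
    have hxk' := hx' k
    rw [e1, e2] at hxk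
    exact (hR1 k (x' k) (x' (k + 1))).injective (hxk.trans hxk'.symm)
  have main : ∀ k : ℤ, x (j + k) = x' (j + k) ∧ x (j + k + 1) = x' (j + k + 1) := by
    intro k
    induction k using Int.induction_on with
    | zero => simpa using ⟨h1, h2⟩
    | succ n ih =>
        have h := step (j + n) ih
        rw [show (j + ((n : ℤ) + 1)) = j + (n : ℤ) + 1 from by ring,
           show (j + (n : ℤ) + 1 + 1) = j + (n : ℤ) + 2 from by ring]
        exact h
    | pred n ih =>
        have h := stepb (j + (-(n : ℤ))) ih
        rw [show (j + (-(n : ℤ) - 1)) = j + -(n : ℤ) - 1 from by ring,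
           show (j + -(n : ℤ) - 1 + 1) = j + -(n : ℤ) from by ring]
        exact h
  funext k
  have := (main (k - j)).1
  simpa using this

/-- No-tangency lemma for parabolic recurrence relations: if `R_j` is strictly
increasing in its first and third arguments and `x, x′` are solutions of
`R_j(x_{j−1}, x_j, x_{j+1}) = 0`, then a coincidence `x_j = x′_j` with
`x_{j−1} ≤ x′_{j−1}`, `x_{j+1} ≤ x′_{j+1}` and one inequality strict is
impossible; consequently every coincidence of two distinct solutions is a
transverse crossing. -/
theorem parabolic_no_tangency
    (R : ℤ → ℝ → ℝ → ℝ → ℝ)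
    (hR1 : ∀ j b c, StrictMono fun a => R j a b c)
    (hR3 : ∀ j a b, StrictMono fun c => R j a b c)
    (x x' : ℤ → ℝ)
    (hx : ∀ j, R j (x (j - 1)) (x j) (x (j + 1)) = 0)
    (hx' : ∀ j, R j (x' (j - 1)) (x' j) (x' (j + 1)) = 0) :
    (∀ j, x j = x' j → x (j - 1) ≤ x' (j - 1) → x (j + 1) ≤ x' (j + 1) →
      (x (j - 1) < x' (j - 1) ∨ x (j + 1) < x' (j + 1)) → False) ∧
    (x ≠ x' → ∀ j, x j = x' j →
      (x (j - 1) - x' (j - 1)) * (x (j + 1) - x' (j + 1)) < 0) := by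
  have T := parab_no_tang_aux R hR1 hR3 x x' hx hx'
  have T' := parab_no_tang_aux R hR1 hR3 x' x hx' hx
  refine ⟨T, ?_⟩
  intro hne j hj
  rcases lt_trichotomy (x (j - 1)) (x' (j - 1)) with h | h | h
  · -- need x' (j+1) < x (j+1)
    have h3 : x' (j + 1) < x (j + 1) := by
      by_contra hc
      push_neg at hc
      exact T j hj h.le hc (Or.inl h)
    exact mul_neg_of_neg_of_pos (sub_neg.mpr h) (sub_pos.mpr h3)
  · exfalso
    apply hne
    have := parab_eq_prop R hR1 hR3 x x' hx hx' (j - 1) h (by simpa using hj)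
    exact this
  · have h3 : x (j + 1) < x' (j + 1) := by
      by_contra hc
      push_neg at hc
      exact T' j hj.symm h.le hc (Or.inl h)
    exact mul_neg_of_pos_of_neg (sub_pos.mpr h) (sub_neg.mpr h3)
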